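/- Suppose p is an odd prime and F is a field. Let W(G) = {x ∈ F[G] : x is fixed by the F-linear extension of every automorphism of G} be the maximal rational S-ring over G = Z_{p^{λ_1}} × ⋯ × Z_{p^{λ_n}}. Then the family of simple quantities {H̄ : H a characteristic subgroup of G} is linearly independent and spans W(G), i.e., it is an F-basis of W(G). -/

import Mathlib

open scoped Classical

noncomputable section

/-- The simple quantity `C̄ = ∑_{g ∈ C} g` of a subset `C` of an additive group `G`,
inside the group algebra `F[G]`. -/
def sqty (F : Type*) [Field F] {G : Type*} [AddGroup G] [Fintype G] (C : Set G) :
    AddMonoidAlgebra F G :=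
  ∑ g ∈ Finset.univ.filter (· ∈ C), AddMonoidAlgebra.single g (1 : F)

set_option linter.unusedSectionVars false
set_option linter.unusedVariables false
set_option linter.unusedTactic false
set_option maxHeartbeats 1000000


def pv (p m : ℕ) (x : ZMod (p ^ m)) : ℕ := if x = 0 then m else x.val.factorization p

section PVLemmas

variable {p : ℕ} (hp : p.Prime)
include hp

omit hp in
@[simp] lemma pv_zero (m : ℕ) : pv p m 0 = m := if_pos rfl

lemma pv_lt_of_ne {m : ℕ} {x : ZMod (p ^ m)} (hx : x ≠ 0) : pv p m x < m := by
  haveI : NeZero (p ^ m) := ⟨pow_ne_zero m hp.pos.ne'⟩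
  rw [pv, if_neg hx]
  by_contra h
  push_neg at h
  have hv : x.val ≠ 0 := fun h0 => hx (by rwa [ZMod.val_eq_zero] at h0)
  have hd : p ^ m ∣ x.val :=
    (Nat.Prime.pow_dvd_iff_le_factorization hp hv).mpr h
  exact absurd (Nat.le_of_dvd (Nat.pos_of_ne_zero hv) hd) (not_le.mpr (ZMod.val_lt x))

lemma pv_le {m : ℕ} (x : ZMod (p ^ m)) : pv p m x ≤ m := by
  rcases eq_or_ne x 0 with rfl | hx
  · simp [pv]
  · exact (pv_lt_of_ne hp hx).le

lemma val_decomp {m : ℕ} {x : ZMod (p ^ m)} (hx : x ≠ 0) :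
    ∃ s : ℕ, ¬ p ∣ s ∧ x.val = p ^ (pv p m x) * s := by
  haveI : NeZero (p ^ m) := ⟨pow_ne_zero m hp.pos.ne'⟩
  have hv : x.val ≠ 0 := fun h0 => hx (by rwa [ZMod.val_eq_zero] at h0)
  refine ⟨x.val / p ^ (x.val.factorization p), Nat.not_dvd_ordCompl hp hv, ?_⟩
  rw [pv, if_neg hx]
  exact (Nat.ordProj_mul_ordCompl_eq_self x.val p).symm

lemma isUnit_natCast_of_not_dvd {m : ℕ} {s : ℕ} (hs : ¬ p ∣ s) :
    IsUnit (s : ZMod (p ^ m)) := by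
  rw [ZMod.isUnit_iff_coprime]
  exact Nat.Coprime.pow_right _ ((Nat.Prime.coprime_iff_not_dvd hp).mpr hs).symm

lemma ppow_eq_zero_iff {m k : ℕ} : ((p : ZMod (p ^ m)) ^ k = 0) ↔ m ≤ k := by
  haveI : NeZero (p ^ m) := ⟨pow_ne_zero m hp.pos.ne'⟩
  have : ((p : ZMod (p ^ m)) ^ k) = ((p ^ k : ℕ) : ZMod (p ^ m)) := by push_cast; ring
  rw [this, ZMod.natCast_eq_zero_iff]
  exact Nat.pow_dvd_pow_iff_le_right hp.one_lt

lemma exists_unit_pv {m : ℕ} (x : ZMod (p ^ m)) :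
    ∃ u : ZMod (p ^ m), IsUnit u ∧ x = (p : ZMod (p ^ m)) ^ (pv p m x) * u := by
  rcases eq_or_ne x 0 with rfl | hx
  · exact ⟨1, isUnit_one, by rw [pv_zero, mul_one, (ppow_eq_zero_iff hp).mpr le_rfl]⟩
  · haveI : NeZero (p ^ m) := ⟨pow_ne_zero m hp.pos.ne'⟩
    obtain ⟨s, hps, hval⟩ := val_decomp hp hx
    refine ⟨(s : ZMod (p ^ m)), isUnit_natCast_of_not_dvd hp hps, ?_⟩
    have : x = ((x.val : ℕ) : ZMod (p ^ m)) := by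
      rw [ZMod.natCast_val, ZMod.cast_id]
    conv_lhs => rw [this, hval]
    push_cast; ring

end PVLemmas
section PVLemmas2

variable {p : ℕ} (hp : p.Prime)
include hp

lemma pv_pow_mul_unit {m k : ℕ} {u : ZMod (p ^ m)} (hu : IsUnit u) :
    pv p m ((p : ZMod (p ^ m)) ^ k * u) = min k m := by
  rcases le_or_gt m k with hmk | hkm
  · rw [(ppow_eq_zero_iff hp).mpr hmk, zero_mul, pv_zero, min_eq_right hmk]
  · haveI : NeZero (p ^ m) := ⟨pow_ne_zero m hp.pos.ne'⟩
    set w := u.val with hw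
    have hwu : ((w : ℕ) : ZMod (p ^ m)) = u := by rw [hw, ZMod.natCast_val, ZMod.cast_id]
    have hcop : Nat.Coprime w (p ^ m) := by
      rw [← ZMod.isUnit_iff_coprime, hwu]; exact hu
    have hxw : (p : ZMod (p ^ m)) ^ k * u = ((p ^ k * w : ℕ) : ZMod (p ^ m)) := by
      rw [← hwu]; push_cast; ring
    have hpw : ¬ p ∣ w := by
      intro hd
      have h1 : p ∣ 1 := hcop ▸ Nat.dvd_gcd hd (dvd_pow_self p (by omega))
      have := hp.one_lt
      have := Nat.dvd_one.mp h1
      omega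
    have hx0 : (p : ZMod (p ^ m)) ^ k * u ≠ 0 := by
      intro h0
      rw [hxw, ZMod.natCast_eq_zero_iff] at h0
      have : p ^ m ∣ p ^ k := (Nat.Coprime.dvd_of_dvd_mul_right
        ((Nat.coprime_comm).mp hcop)) h0
      exact absurd ((Nat.pow_dvd_pow_iff_le_right hp.one_lt).mp this) (by omega)
    have hval : ((p : ZMod (p ^ m)) ^ k * u).val = (p ^ k * w) % (p ^ m) := by
      rw [hxw, ZMod.val_natCast]
    set r := (p ^ k * w) % (p ^ m) with hr
    have hr0 : r ≠ 0 := by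
      intro h0
      apply hx0
      have h2 : ((p : ZMod (p ^ m)) ^ k * u).val = 0 := by rw [hval]; exact h0
      rwa [ZMod.val_eq_zero] at h2
    have hdk : p ^ k ∣ r := by
      rw [hr, Nat.dvd_mod_iff (pow_dvd_pow p hkm.le)]
      exact Dvd.intro w rfl
    have hndk : ¬ p ^ (k + 1) ∣ r := by
      rw [hr, Nat.dvd_mod_iff (pow_dvd_pow p (by omega))]
      intro hd
      rw [pow_succ] at hd
      exact hpw ((mul_dvd_mul_iff_left (pow_ne_zero k hp.pos.ne')).mp hd)
    have hfact : r.factorization p = k := by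
      have h1 : k ≤ r.factorization p :=
        (Nat.Prime.pow_dvd_iff_le_factorization hp hr0).mp hdk
      have h2 : ¬ (k + 1 ≤ r.factorization p) := fun h =>
        hndk ((Nat.Prime.pow_dvd_iff_le_factorization hp hr0).mpr h)
      omega
    rw [pv, if_neg hx0, hval, hfact, min_eq_left hkm.le]

lemma pv_pow_mul {m k : ℕ} (x : ZMod (p ^ m)) :
    pv p m ((p : ZMod (p ^ m)) ^ k * x) = min (k + pv p m x) m := by
  set v := pv p m x with hv
  obtain ⟨u, hu, hx⟩ := exists_unit_pv hp x
  rw [← hv] at hx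
  rw [hx, ← mul_assoc, ← pow_add, pv_pow_mul_unit hp hu]

lemma pv_ppow {m k : ℕ} : pv p m ((p : ZMod (p ^ m)) ^ k) = min k m := by
  have := pv_pow_mul_unit hp (m := m) (k := k) isUnit_one
  rwa [mul_one] at this

lemma exists_eq_pow_mul_of_le_pv {m k : ℕ} {x : ZMod (p ^ m)} (hk : k ≤ pv p m x) :
    ∃ y, x = (p : ZMod (p ^ m)) ^ k * y := by
  set v := pv p m x with hv
  obtain ⟨u, hu, hx⟩ := exists_unit_pv hp x
  rw [← hv] at hx
  refine ⟨(p : ZMod (p ^ m)) ^ (v - k) * u, ?_⟩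
  rw [hx, ← mul_assoc, ← pow_add]
  congr 2
  omega

lemma min_pv_le_pv_add {m : ℕ} (x y : ZMod (p ^ m)) :
    min (pv p m x) (pv p m y) ≤ pv p m (x + y) := by
  set k := min (pv p m x) (pv p m y) with hk
  obtain ⟨x', hx'⟩ := exists_eq_pow_mul_of_le_pv hp (x := x) (min_le_left _ _)
  obtain ⟨y', hy'⟩ := exists_eq_pow_mul_of_le_pv hp (x := y) (min_le_right _ _)
  have : x + y = (p : ZMod (p ^ m)) ^ k * (x' + y') := by rw [hx', hy', mul_add]
  have h2 := pv_pow_mul hp (m := m) (k := k) (x' + y')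
  rw [← this] at h2
  have := pv_le hp x
  omega

lemma pv_neg {m : ℕ} (x : ZMod (p ^ m)) : pv p m (-x) = pv p m x := by
  set v := pv p m x with hv
  obtain ⟨u, hu, hx⟩ := exists_unit_pv hp x
  rw [← hv] at hx
  have hnx : -x = (p : ZMod (p ^ m)) ^ v * (-u) := by rw [hx]; ring
  rw [hnx, pv_pow_mul_unit hp hu.neg, hv, min_eq_left (pv_le hp x)]

lemma pv_add_of_lt {m : ℕ} {x y : ZMod (p ^ m)} (h : pv p m y < pv p m x) :
    pv p m (x + y) = pv p m y := by
  have h1 := min_pv_le_pv_add hp x y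
  have h2 : min (pv p m (x + y)) (pv p m (-x)) ≤ pv p m y := by
    have := min_pv_le_pv_add hp (x + y) (-x)
    simpa using this
  rw [pv_neg hp] at h2
  omega

end PVLemmas2
section Groups

variable (p : ℕ) {n : ℕ} (lam : Fin n → ℕ)

abbrev GG := ∀ i : Fin n, ZMod (p ^ lam i)

def dd (i j : Fin n) : ℕ := lam i - lam j

def can (a : Fin n → ℕ) : GG p lam := fun i => (p : ZMod (p ^ lam i)) ^ (a i)

def Admissible (a : Fin n → ℕ) : Prop :=
  (∀ i, a i ≤ lam i) ∧ (∀ i j : Fin n, i ≤ j → a i ≤ a j) ∧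
  (∀ i j : Fin n, i ≤ j → a j + lam i ≤ a i + lam j)

variable {p}

lemma cast_mod_ppow (hp : p.Prime) {m : ℕ} (a e q : ℕ) (h : m ≤ e + q) :
    (p : ZMod (p ^ m)) ^ e * ((a % p ^ q : ℕ) : ZMod (p ^ m)) =
    (p : ZMod (p ^ m)) ^ e * ((a : ℕ) : ZMod (p ^ m)) := by
  haveI : NeZero (p ^ m) := ⟨pow_ne_zero m hp.pos.ne'⟩
  conv_rhs => rw [← Nat.div_add_mod a (p ^ q)]
  push_cast
  rw [mul_add]
  have hz : (p : ZMod (p ^ m)) ^ e * ((p : ZMod (p ^ m)) ^ q * ((a / p ^ q : ℕ) : ZMod (p ^ m))) = 0 := by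
    rw [← mul_assoc, ← pow_add, (ppow_eq_zero_iff hp).mpr (by omega), zero_mul]
  rw [hz, zero_add]

def Tmap (hp : p.Prime) (i j : Fin n) : ZMod (p ^ lam j) →+ ZMod (p ^ lam i) where
  toFun x := (p : ZMod (p ^ lam i)) ^ (dd lam i j) * ((x.val : ℕ) : ZMod (p ^ lam i))
  map_zero' := by
    haveI : NeZero (p ^ lam j) := ⟨pow_ne_zero _ hp.pos.ne'⟩
    simp
  map_add' x y := by
    haveI : NeZero (p ^ lam j) := ⟨pow_ne_zero _ hp.pos.ne'⟩
    rw [ZMod.val_add, cast_mod_ppow hp _ _ _ (by simp only [dd]; omega)]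
    push_cast
    ring

end Groups
section Auts

variable {p : ℕ} {n : ℕ} {lam : Fin n → ℕ}

def scaleAut (i : Fin n) (u : (ZMod (p ^ lam i))ˣ) : AddAut (GG p lam) where
  toFun g := Function.update g i ((u : ZMod (p ^ lam i)) * g i)
  invFun g := Function.update g i ((↑u⁻¹ : ZMod (p ^ lam i)) * g i)
  left_inv g := by
    funext k
    rcases eq_or_ne k i with rfl | hk
    · simp
    · simp [Function.update_of_ne hk]
  right_inv g := by
    funext k
    rcases eq_or_ne k i with rfl | hk
    · simp
    · simp [Function.update_of_ne hk]
  map_add' g h := by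
    funext k
    rcases eq_or_ne k i with rfl | hk
    · simp [mul_add]
    · simp [Function.update_of_ne hk]

@[simp] lemma scaleAut_apply_same (i : Fin n) (u : (ZMod (p ^ lam i))ˣ) (g : GG p lam) :
    scaleAut i u g i = (u : ZMod (p ^ lam i)) * g i := Function.update_self _ _ _

lemma scaleAut_apply_ne (i : Fin n) (u : (ZMod (p ^ lam i))ˣ) (g : GG p lam)
    {k : Fin n} (hk : k ≠ i) : scaleAut i u g k = g k := Function.update_of_ne hk _ _

def transAut (hp : p.Prime) (i j : Fin n) (hij : i ≠ j) : AddAut (GG p lam) where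
  toFun g := Function.update g i (g i + Tmap lam hp i j (g j))
  invFun g := Function.update g i (g i - Tmap lam hp i j (g j))
  left_inv g := by
    funext k
    rcases eq_or_ne k i with rfl | hk
    · simp [Function.update_of_ne hij.symm]
    · simp [Function.update_of_ne hk]
  right_inv g := by
    funext k
    rcases eq_or_ne k i with rfl | hk
    · simp [Function.update_of_ne hij.symm]
    · simp [Function.update_of_ne hk]
  map_add' g h := by
    funext k
    rcases eq_or_ne k i with rfl | hk
    · simp [Function.update_of_ne hij.symm, map_add]
      abel
    · simp [Function.update_of_ne hk]

@[simp] lemma transAut_apply_same (hp : p.Prime) (i j : Fin n) (hij : i ≠ j) (g : GG p lam) :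
    transAut hp i j hij g i = g i + Tmap lam hp i j (g j) := Function.update_self _ _ _

lemma transAut_apply_ne (hp : p.Prime) (i j : Fin n) (hij : i ≠ j) (g : GG p lam)
    {k : Fin n} (hk : k ≠ i) : transAut hp i j hij g k = g k := Function.update_of_ne hk _ _

end Auts
section BoxAmap

variable {p : ℕ} {n : ℕ} {lam : Fin n → ℕ}

def BoxG (hp : p.Prime) (lam : Fin n → ℕ) (b : Fin n → ℕ) : AddSubgroup (GG p lam) where
  carrier := {g | ∀ i, min (b i) (lam i) ≤ pv p (lam i) (g i)}
  zero_mem' := fun i => by simp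
  add_mem' := by
    intro g h hg hh i
    have := min_pv_le_pv_add hp (g i) (h i)
    have h1 := hg i; have h2 := hh i
    simp only [Pi.add_apply]
    omega
  neg_mem' := by
    intro g hg i
    rw [Pi.neg_apply, pv_neg hp]
    exact hg i

lemma mem_BoxG_iff {hp : p.Prime} {b : Fin n → ℕ} {g : GG p lam} :
    g ∈ BoxG hp lam b ↔ ∀ i, min (b i) (lam i) ≤ pv p (lam i) (g i) := Iff.rfl

def amap (p : ℕ) (lam : Fin n → ℕ) (g : GG p lam) (i : Fin n) : ℕ :=
  Finset.univ.inf' ⟨i, Finset.mem_univ i⟩ fun j => dd lam i j + pv p (lam j) (g j)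

lemma amap_le (g : GG p lam) (i j : Fin n) :
    amap p lam g i ≤ dd lam i j + pv p (lam j) (g j) :=
  Finset.inf'_le _ (Finset.mem_univ j)

lemma amap_le_pv (g : GG p lam) (i : Fin n) :
    amap p lam g i ≤ pv p (lam i) (g i) := by
  have := amap_le g i i
  simp only [dd, Nat.sub_self, zero_add] at this
  exact this

lemma exists_amap_eq (g : GG p lam) (i : Fin n) :
    ∃ j, amap p lam g i = dd lam i j + pv p (lam j) (g j) := by
  obtain ⟨j, _, hj⟩ := Finset.exists_mem_eq_inf' ⟨i, Finset.mem_univ i⟩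
    (fun j => dd lam i j + pv p (lam j) (g j))
  exact ⟨j, hj⟩

lemma le_amap {g : GG p lam} {i : Fin n} {c : ℕ}
    (h : ∀ j, c ≤ dd lam i j + pv p (lam j) (g j)) : c ≤ amap p lam g i :=
  Finset.le_inf' _ _ fun j _ => h j

lemma pv_Tmap (hp : p.Prime) (i j : Fin n) (x : ZMod (p ^ lam j)) :
    pv p (lam i) (Tmap lam hp i j x) = min (dd lam i j + pv p (lam j) x) (lam i) := by
  rcases eq_or_ne x 0 with rfl | hx
  · rw [map_zero, pv_zero]
    have : lam i ≤ dd lam i j + lam j := by simp only [dd]; omega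
    simp only [pv_zero]
    omega
  · obtain ⟨s, hps, hval⟩ := val_decomp hp hx
    have : Tmap lam hp i j x = (p : ZMod (p ^ lam i)) ^ (dd lam i j + pv p (lam j) x) *
        ((s : ℕ) : ZMod (p ^ lam i)) := by
      show (p : ZMod (p ^ lam i)) ^ (dd lam i j) * ((x.val : ℕ) : ZMod (p ^ lam i)) = _
      rw [hval]; push_cast; ring
    rw [this, pv_pow_mul_unit hp (isUnit_natCast_of_not_dvd hp hps)]

lemma adm_le_dd (hmono : Monotone lam) {a : Fin n → ℕ} (ha : Admissible lam a)
    (i j : Fin n) : a i ≤ dd lam i j + a j := by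
  rcases le_total i j with h | h
  · have := ha.2.1 i j h
    omega
  · have h1 := ha.2.2 j i h
    have h2 := hmono h
    simp only [dd]
    omega

lemma amap_admissible (hp : p.Prime) (hmono : Monotone lam) (g : GG p lam) :
    Admissible lam (amap p lam g) := by
  refine ⟨fun i => le_trans (amap_le_pv g i) (pv_le hp _), ?_, ?_⟩
  · intro i k hik
    obtain ⟨j, hj⟩ := exists_amap_eq g k
    have h1 := amap_le g i j
    have h2 : dd lam i j ≤ dd lam k j := by
      have := hmono hik; simp only [dd]; omega
    omega
  · intro i k hik
    obtain ⟨j, hj⟩ := exists_amap_eq g i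
    have h1 := amap_le g k j
    have h2 : dd lam k j + lam i ≤ dd lam i j + lam k := by
      have := hmono hik; simp only [dd]; omega
    omega

lemma pv_can (hp : p.Prime) {a : Fin n → ℕ} (ha : ∀ i, a i ≤ lam i) (i : Fin n) :
    pv p (lam i) (can p lam a i) = a i := by
  rw [can, pv_ppow hp, min_eq_left (ha i)]

lemma amap_can (hp : p.Prime) (hmono : Monotone lam) {a : Fin n → ℕ}
    (ha : Admissible lam a) : amap p lam (can p lam a) = a := by
  funext i
  refine le_antisymm (le_trans (amap_le_pv _ i) (le_of_eq (pv_can hp ha.1 i))) ?_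
  refine le_amap fun j => ?_
  rw [pv_can hp ha.1 j]
  exact adm_le_dd hmono ha i j

lemma mem_box_iff_amap {hp : p.Prime} (hmono : Monotone lam) {b : Fin n → ℕ}
    (hb : Admissible lam b) {g : GG p lam} :
    g ∈ BoxG hp lam b ↔ ∀ i, b i ≤ amap p lam g i := by
  constructor
  · intro hg i
    refine le_amap fun j => ?_
    have h1 := hg j
    have h2 := adm_le_dd hmono hb i j
    have h3 := hb.1 j
    omega
  · intro h i
    have h1 := le_trans (h i) (amap_le_pv g i)
    omega

lemma can_mem_box_iff {hp : p.Prime} {a b : Fin n → ℕ} (ha : ∀ i, a i ≤ lam i)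
    (hb : ∀ i, b i ≤ lam i) : can p lam a ∈ BoxG hp lam b ↔ ∀ i, b i ≤ a i := by
  rw [mem_BoxG_iff]
  constructor
  · intro h i
    have := h i
    rw [pv_can hp ha i] at this
    have := hb i
    omega
  · intro h i
    rw [pv_can hp ha i]
    have h1 := h i
    omega

end BoxAmap
section NormalForm

variable {p : ℕ} {n : ℕ} {lam : Fin n → ℕ}

def mulUnitEquiv {R : Type*} [CommRing R] (u : Rˣ) : R ≃+ R where
  toFun x := (u : R) * x
  invFun x := (↑u⁻¹ : R) * x
  left_inv x := by simp [← mul_assoc]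
  right_inv x := by simp [← mul_assoc]
  map_add' x y := mul_add _ _ _

lemma phaseB (hp : p.Prime) (g : GG p lam) :
    ∃ φ : AddAut (GG p lam), ∀ i, φ g i = (p : ZMod (p ^ lam i)) ^ (pv p (lam i) (g i)) := by
  have h : ∀ i, ∃ U : (ZMod (p ^ lam i))ˣ,
      g i = (p : ZMod (p ^ lam i)) ^ (pv p (lam i) (g i)) * (U : ZMod (p ^ lam i)) := by
    intro i
    set v := pv p (lam i) (g i) with hv
    obtain ⟨u, hu, hgu⟩ := exists_unit_pv hp (g i)
    rw [← hv] at hgu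
    obtain ⟨U, hUx⟩ := hu
    exact ⟨U, by rw [hgu, hUx]⟩
  choose U hU using h
  refine ⟨AddEquiv.piCongrRight fun i => mulUnitEquiv (U i)⁻¹, fun i => ?_⟩
  show (↑(U i)⁻¹ : ZMod (p ^ lam i)) * g i = _
  conv_lhs => rw [hU i]
  rw [mul_comm ((↑(U i)⁻¹ : ZMod (p ^ lam i))) _, Units.mul_inv_cancel_right]

lemma phaseA (hp : p.Prime) (hmono : Monotone lam) :
    ∀ N : ℕ, ∀ g : GG p lam,
      (∑ i, (pv p (lam i) (g i) - amap p lam g i)) ≤ N →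
      ∃ φ : AddAut (GG p lam), ∀ i, pv p (lam i) (φ g i) = amap p lam g i := by
  intro N
  induction N with
  | zero =>
    intro g hg
    refine ⟨0, fun i => ?_⟩
    show pv p (lam i) (g i) = _
    have h0 : ∀ i ∈ Finset.univ, pv p (lam i) (g i) - amap p lam g i = 0 :=
      Finset.sum_eq_zero_iff.mp (Nat.le_zero.mp hg)
    have := h0 i (Finset.mem_univ i)
    have := amap_le_pv g i
    omega
  | succ N ih =>
    intro g hg
    by_cases hgood : ∀ i, pv p (lam i) (g i) = amap p lam g i
    · exact ⟨0, fun i => hgood i⟩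
    · push_neg at hgood
      obtain ⟨i, hi⟩ := hgood
      have hilt : amap p lam g i < pv p (lam i) (g i) :=
        lt_of_le_of_ne (amap_le_pv g i) (Ne.symm hi)
      obtain ⟨j, hj⟩ := exists_amap_eq g i
      have hij : j ≠ i := by
        intro h
        subst h
        simp only [dd, Nat.sub_self, zero_add] at hj
        omega
      set ψ := transAut hp i j (Ne.symm hij) with hψ
      set g' := ψ g with hg'
      have hne : ∀ k, k ≠ i → g' k = g k := fun k hk => transAut_apply_ne hp i j _ g hk
      have hpvne : ∀ k, k ≠ i → pv p (lam k) (g' k) = pv p (lam k) (g k) :=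
        fun k hk => by rw [hne k hk]
      have hpi : pv p (lam i) (g' i) = amap p lam g i := by
        have hTi : pv p (lam i) (Tmap lam hp i j (g j)) = amap p lam g i := by
          rw [pv_Tmap hp]
          have h1 : amap p lam g i ≤ lam i := le_trans (amap_le_pv g i) (pv_le hp _)
          omega
        have : g' i = g i + Tmap lam hp i j (g j) := transAut_apply_same hp i j _ g
        rw [this, pv_add_of_lt hp (by omega), hTi]
      have hamap : amap p lam g' = amap p lam g := by
        funext k
        refine le_antisymm ?_ (le_amap fun j' => ?_)
        · obtain ⟨j0, hj0⟩ := exists_amap_eq g k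
          rcases eq_or_ne j0 i with heq | hji
          · rw [heq] at hj0
            have h1 := amap_le g' k i
            rw [hpi] at h1
            have h2 := amap_le_pv g i
            omega
          · have h1 := amap_le g' k j0
            rw [hpvne j0 hji] at h1
            omega
        · rcases eq_or_ne j' i with heq | hji
          · subst heq
            rw [hpi, hj]
            have htri : dd lam k j ≤ dd lam k j' + dd lam j' j := by
              simp only [dd]; omega
            have h2 := amap_le g k j
            omega
          · rw [hpvne j' hji]
            exact amap_le g k j'
      have hmeas : (∑ k, (pv p (lam k) (g' k) - amap p lam g' k)) ≤ N := by
        rw [hamap]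
        have hlt : (∑ k, (pv p (lam k) (g' k) - amap p lam g k)) <
            (∑ k, (pv p (lam k) (g k) - amap p lam g k)) := by
          refine Finset.sum_lt_sum (fun k _ => ?_) ⟨i, Finset.mem_univ i, ?_⟩
          · rcases eq_or_ne k i with rfl | hk
            · rw [hpi]; omega
            · rw [hpvne k hk]
          · rw [hpi]; omega
        omega
      obtain ⟨φ', hφ'⟩ := ih g' hmeas
      refine ⟨φ' + ψ, fun k => ?_⟩
      rw [AddAut.mul_apply, ← hg', hφ' k, hamap]

lemma normal_form (hp : p.Prime) (hmono : Monotone lam) (g : GG p lam) :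
    ∃ φ : AddAut (GG p lam), φ g = can p lam (amap p lam g) := by
  obtain ⟨φ₁, hφ₁⟩ := phaseA hp hmono _ g le_rfl
  obtain ⟨φ₂, hφ₂⟩ := phaseB hp (φ₁ g)
  refine ⟨φ₂ + φ₁, ?_⟩
  funext i
  rw [AddAut.mul_apply, hφ₂ i, hφ₁ i]
  rfl

end NormalForm
section Char

variable {p : ℕ} {n : ℕ} {lam : Fin n → ℕ}

lemma pv_of_pow_mul_eq_zero (hp : p.Prime) {m e : ℕ} {z : ZMod (p ^ m)}
    (h : (p : ZMod (p ^ m)) ^ e * z = 0) : m ≤ e + pv p m z := by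
  have := pv_pow_mul hp (m := m) (k := e) z
  rw [h, pv_zero] at this
  omega

lemma box_hom_invariant (hp : p.Prime) (hmono : Monotone lam) {b : Fin n → ℕ}
    (hb : Admissible lam b) (f : GG p lam →+ GG p lam) :
    ∀ g ∈ BoxG hp lam b, f g ∈ BoxG hp lam b := by
  intro g hg
  rw [← Finset.univ_sum_single g, map_sum]
  refine AddSubgroup.sum_mem _ fun i _ => ?_
  have hgi : b i ≤ pv p (lam i) (g i) := by
    have h1 := hg i
    have h2 := hb.1 i
    omega
  obtain ⟨y, hy⟩ := exists_eq_pow_mul_of_le_pv hp hgi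
  set w := f (Pi.single i (1 : ZMod (p ^ lam i))) with hw
  have hw0 : ∀ k, (p : ZMod (p ^ lam k)) ^ (lam i) * w k = 0 := by
    intro k
    have h1 : (p ^ lam i : ℕ) • (Pi.single i (1 : ZMod (p ^ lam i)) : GG p lam) = 0 := by
      rw [← Pi.single_smul, nsmul_eq_mul, mul_one]
      rw [show ((p ^ lam i : ℕ) : ZMod (p ^ lam i)) = 0 from ZMod.natCast_self _]
      exact Pi.single_zero i
    have h2 : (p ^ lam i : ℕ) • w = 0 := by
      rw [hw, ← map_nsmul, h1, map_zero]
    have h3 := congrFun h2 k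
    rw [Pi.smul_apply, nsmul_eq_mul] at h3
    rw [show ((p ^ lam i : ℕ) : ZMod (p ^ lam k)) = (p : ZMod (p ^ lam k)) ^ lam i from by
      push_cast; ring] at h3
    simpa using h3
  haveI : NeZero (p ^ lam i) := ⟨pow_ne_zero _ hp.pos.ne'⟩
  have hval : (Pi.single i (g i) : GG p lam) = y.val • ((p ^ b i : ℕ) • (Pi.single i (1 : ZMod (p ^ lam i)) : GG p lam)) := by
    rw [← Pi.single_smul, ← Pi.single_smul]
    congr 1
    rw [nsmul_eq_mul, nsmul_eq_mul, mul_one, hy, ZMod.natCast_val, ZMod.cast_id]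
    push_cast
    ring
  rw [hval, map_nsmul, map_nsmul, ← hw]
  refine AddSubgroup.nsmul_mem _ ?_ _
  intro k
  have h1 : ((p ^ b i : ℕ) • w) k = (p : ZMod (p ^ lam k)) ^ (b i) * w k := by
    rw [Pi.smul_apply, nsmul_eq_mul]
    push_cast
    ring
  rw [h1, pv_pow_mul hp]
  have h2 := pv_of_pow_mul_eq_zero hp (hw0 k)
  have h3 := adm_le_dd hmono hb k i
  have h4 := hb.1 k
  simp only [dd] at h3
  omega

lemma box_is_char (hp : p.Prime) (hmono : Monotone lam) {b : Fin n → ℕ}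
    (hb : Admissible lam b) (φ : AddAut (GG p lam)) :
    (BoxG hp lam b).map φ.toAddMonoidHom = BoxG hp lam b := by
  refine le_antisymm ?_ ?_
  · intro x hx
    obtain ⟨g, hg, rfl⟩ := hx
    exact box_hom_invariant hp hmono hb φ.toAddMonoidHom g hg
  · intro g hg
    refine ⟨φ.symm g, box_hom_invariant hp hmono hb φ.symm.toAddMonoidHom g hg, ?_⟩
    simp

lemma char_eq_box (hp : p.Prime) (hp2 : p ≠ 2) (hmono : Monotone lam)
    (H : AddSubgroup (GG p lam))
    (hH : ∀ φ : AddAut (GG p lam), H.map φ.toAddMonoidHom = H) :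
    ∃ b, Admissible lam b ∧ H = BoxG hp lam b := by
  have hmemH : ∀ (φ : AddAut (GG p lam)) g, g ∈ H → φ g ∈ H := by
    intro φ g hg
    have := AddSubgroup.mem_map_of_mem φ.toAddMonoidHom hg
    rw [hH φ] at this
    exact this
  have two_unit : ∀ i : Fin n, IsUnit (2 : ZMod (p ^ lam i)) := by
    intro i
    have : ((2 : ℕ) : ZMod (p ^ lam i)) = 2 := by norm_cast
    rw [← this, ZMod.isUnit_iff_coprime]
    exact Nat.Coprime.pow_right _ ((Nat.coprime_primes Nat.prime_two hp).mpr (Ne.symm hp2))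
  have hsingle : ∀ g ∈ H, ∀ i, Pi.single i (g i) ∈ H := by
    intro g hg i
    have hd : scaleAut i (two_unit i).unit g - g = Pi.single i (g i) := by
      funext k
      rcases eq_or_ne k i with rfl | hk
      · rw [Pi.sub_apply, scaleAut_apply_same, IsUnit.unit_spec, Pi.single_eq_same]
        ring
      · rw [Pi.sub_apply, scaleAut_apply_ne i _ g hk, Pi.single_eq_of_ne hk, sub_self]
    rw [← hd]
    exact sub_mem (hmemH _ g hg) hg
  have htrans : ∀ g ∈ H, ∀ i j : Fin n, ∀ hij : i ≠ j,
      Pi.single i (Tmap lam hp i j (g j)) ∈ H := by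
    intro g hg i j hij
    have hd : transAut hp i j hij g - g = Pi.single i (Tmap lam hp i j (g j)) := by
      funext k
      rcases eq_or_ne k i with rfl | hk
      · rw [Pi.sub_apply, transAut_apply_same, Pi.single_eq_same]
        ring
      · rw [Pi.sub_apply, transAut_apply_ne hp i j hij g hk, Pi.single_eq_of_ne hk, sub_self]
    rw [← hd]
    exact sub_mem (hmemH _ g hg) hg
  set b : Fin n → ℕ := fun i => sInf {k | ∃ g ∈ H, pv p (lam i) (g i) = k} with hb
  have hSne : ∀ i, (lam i) ∈ {k | ∃ g ∈ H, pv p (lam i) (g i) = k} := by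
    intro i
    exact ⟨0, zero_mem H, by rw [Pi.zero_apply, pv_zero]⟩
  have hble : ∀ i, ∀ g ∈ H, b i ≤ pv p (lam i) (g i) := by
    intro i g hg
    exact Nat.sInf_le ⟨g, hg, rfl⟩
  have hblam : ∀ i, b i ≤ lam i := fun i => Nat.sInf_le (hSne i)
  have hach : ∀ i, ∃ g ∈ H, pv p (lam i) (g i) = b i := by
    intro i
    exact Nat.sInf_mem ⟨lam i, hSne i⟩
  have hbdd : ∀ i j : Fin n, b i ≤ dd lam i j + b j := by
    intro i j
    rcases eq_or_ne i j with rfl | hij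
    · simp [dd]
    · obtain ⟨g, hg, hgj⟩ := hach j
      have h1 := htrans g hg i j hij
      have h2 := hble i _ h1
      rw [Pi.single_eq_same, pv_Tmap hp, hgj] at h2
      have := hblam i
      omega
  have hadm : Admissible lam b := by
    refine ⟨hblam, fun i j hij => ?_, fun i j hij => ?_⟩
    · have h1 := hbdd i j
      have h2 := hmono hij
      simp only [dd] at h1
      omega
    · have h1 := hbdd j i
      have h2 := hmono hij
      simp only [dd] at h1
      omega
  refine ⟨b, hadm, ?_⟩
  ext g
  constructor
  · intro hg i
    have h1 := hble i g hg
    omega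
  · intro hg
    rw [← Finset.univ_sum_single g]
    refine AddSubgroup.sum_mem _ fun i _ => ?_
    obtain ⟨g₀, hg₀, hg₀i⟩ := hach i
    have hs₀ : Pi.single i (g₀ i) ∈ H := hsingle g₀ hg₀ i
    -- decompose
    set v := pv p (lam i) (g i) with hv
    have hbv : b i ≤ v := by
      have h1 := hg i
      have h2 := hblam i
      omega
    obtain ⟨u', hu', hgi⟩ := exists_unit_pv hp (g i)
    rw [← hv] at hgi
    obtain ⟨u₀, hu₀, hg₀d⟩ := exists_unit_pv hp (g₀ i)
    rw [hg₀i] at hg₀d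
    obtain ⟨U, hU⟩ := hu₀
    rw [← hU] at hg₀d
    set t : ZMod (p ^ lam i) := (p : ZMod (p ^ lam i)) ^ (v - b i) * u' * ↑U⁻¹ with ht
    have hgt : g i = t * g₀ i := by
      rw [hgi, hg₀d, ht]
      have hUU : (↑U⁻¹ : ZMod (p ^ lam i)) * ↑U = 1 := by
        norm_cast
        exact U.inv_mul
      have hpow : (p : ZMod (p ^ lam i)) ^ (v - b i) * (p : ZMod (p ^ lam i)) ^ (b i) =
          (p : ZMod (p ^ lam i)) ^ v := by
        rw [← pow_add]
        congr 1
        omega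
      linear_combination (-(((p : ZMod (p ^ lam i)) ^ (v - b i) *
        (p : ZMod (p ^ lam i)) ^ (b i) * u') * hUU) - u' * hpow)
    haveI : NeZero (p ^ lam i) := ⟨pow_ne_zero _ hp.pos.ne'⟩
    have hfin : (Pi.single i (g i) : GG p lam) = t.val • (Pi.single i (g₀ i) : GG p lam) := by
      rw [← Pi.single_smul]
      congr 1
      rw [nsmul_eq_mul, ZMod.natCast_val, ZMod.cast_id, ← hgt]
    rw [hfin]
    exact AddSubgroup.nsmul_mem _ hs₀ _
end Char
section Sqty

lemma ma_smul_apply {F G : Type*} [Field F] [AddGroup G] (c : F)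
    (y : AddMonoidAlgebra F G) (g : G) : (c • y).coeff g = c * y.coeff g := rfl


variable (F : Type*) [Field F]

lemma sqty_apply {G : Type*} [AddGroup G] [Fintype G] (C : Set G) (g : G) :
    (sqty F C).coeff g = if g ∈ C then 1 else 0 := by
  classical
  rw [sqty, AddMonoidAlgebra.coeff_sum, Finsupp.finset_sum_apply]
  simp only [AddMonoidAlgebra.coeff_single, Finsupp.single_apply]
  rw [Finset.sum_ite_eq' (Finset.univ.filter (· ∈ C)) g (fun _ => (1 : F))]
  simp [Finset.mem_filter]

lemma mapDomain_sqty {G : Type*} [AddGroup G] [Fintype G] (C : Set G) (φ : G ≃ G)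
    (hC : ∀ g, φ g ∈ C ↔ g ∈ C) :
    AddMonoidAlgebra.mapDomain (⇑φ) (sqty F C) = sqty F C := by
  classical
  apply AddMonoidAlgebra.coeff_injective
  rw [AddMonoidAlgebra.coeff_mapDomain, sqty, AddMonoidAlgebra.coeff_sum, Finsupp.mapDomain_finset_sum]
  simp only [AddMonoidAlgebra.coeff_single, Finsupp.mapDomain_single]
  refine Finset.sum_equiv φ ?_ ?_
  · intro i
    simp only [Finset.mem_filter, Finset.mem_univ, true_and]
    exact (hC i).symm
  · intro i _
    rfl

end Sqty
section MainAux

variable {p : ℕ} {n : ℕ} {lam : Fin n → ℕ}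

lemma box_mono (hp : p.Prime) {b b' : Fin n → ℕ} (h : ∀ i, b' i ≤ b i) :
    BoxG hp lam b ≤ BoxG hp lam b' := by
  intro g hg i
  have h1 := hg i
  have h2 := h i
  omega

end MainAux

/-- For an odd prime `p` and `G = Z_{p^{λ_1}} × ⋯ × Z_{p^{λ_n}}`, the simple quantities of
the characteristic subgroups of `G` are linearly independent and span the maximal rational
S-ring `W(G) = {x ∈ F[G] : x is fixed by every automorphism of G}`; i.e. they form an
`F`-basis of `W(G)`. -/
theorem characteristic_subgroups_basis (p : ℕ) (hp : p.Prime) (hp2 : p ≠ 2) [NeZero p]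
    (F : Type*) [Field F]
    (n : ℕ) (hn : 1 ≤ n) (lam : Fin n → ℕ) (hlam : ∀ i, 1 ≤ lam i) (hmono : Monotone lam) :
    LinearIndependent F
      (fun H : {H : AddSubgroup (∀ i : Fin n, ZMod (p ^ lam i)) //
          ∀ φ : AddAut (∀ i : Fin n, ZMod (p ^ lam i)), H.map φ.toAddMonoidHom = H} =>
        sqty F ((H : AddSubgroup (∀ i : Fin n, ZMod (p ^ lam i))) :
          Set (∀ i : Fin n, ZMod (p ^ lam i)))) ∧
    ∀ x : AddMonoidAlgebra F (∀ i : Fin n, ZMod (p ^ lam i)),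
      x ∈ Submodule.span F (Set.range
          (fun H : {H : AddSubgroup (∀ i : Fin n, ZMod (p ^ lam i)) //
              ∀ φ : AddAut (∀ i : Fin n, ZMod (p ^ lam i)), H.map φ.toAddMonoidHom = H} =>
            sqty F ((H : AddSubgroup (∀ i : Fin n, ZMod (p ^ lam i))) :
              Set (∀ i : Fin n, ZMod (p ^ lam i))))) ↔
        ∀ φ : AddAut (∀ i : Fin n, ZMod (p ^ lam i)), AddMonoidAlgebra.mapDomain (⇑φ) x = x := by
  classical
  have classify := fun H : {H : AddSubgroup (GG p lam) //
      ∀ φ : AddAut (GG p lam), H.map φ.toAddMonoidHom = H} =>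
    char_eq_box hp hp2 hmono H.1 H.2
  choose bOf hbOfAdm hbOfEq using classify
  set pt : {H : AddSubgroup (GG p lam) //
      ∀ φ : AddAut (GG p lam), H.map φ.toAddMonoidHom = H} → GG p lam :=
    fun H => can p lam (bOf H) with hpt
  have hpt_mem : ∀ H, pt H ∈ H.1 := by
    intro H
    rw [hbOfEq H]
    exact (can_mem_box_iff (hbOfAdm H).1 (hbOfAdm H).1).mpr fun i => le_rfl
  have hpt_le : ∀ H K : {H : AddSubgroup (GG p lam) //
      ∀ φ : AddAut (GG p lam), H.map φ.toAddMonoidHom = H}, pt H ∈ K.1 → H.1 ≤ K.1 := by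
    intro H K hmem
    rw [hbOfEq K] at hmem
    rw [hbOfEq H, hbOfEq K]
    exact box_mono hp ((can_mem_box_iff (hbOfAdm H).1 (hbOfAdm K).1).mp hmem)
  constructor
  · rw [linearIndependent_iff']
    intro s c hsum K0 hK0
    have hev : ∀ H ∈ s, c H + ∑ K ∈ s.filter (fun K => H.1 < K.1), c K = 0 := by
      intro H hHs
      have h0 := congrArg (fun f : AddMonoidAlgebra F (GG p lam) => f.coeff (pt H)) hsum
      rw [AddMonoidAlgebra.coeff_sum, Finsupp.finset_sum_apply] at h0
      simp only [ma_smul_apply, sqty_apply, AddMonoidAlgebra.coeff_zero, Finsupp.coe_zero, Pi.zero_apply,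
        SetLike.mem_coe, mul_ite, mul_one, mul_zero] at h0
      rw [← Finset.sum_filter] at h0
      have hfe : s.filter (fun K => pt H ∈ K.1) = insert H (s.filter fun K => H.1 < K.1) := by
        ext K
        simp only [Finset.mem_filter, Finset.mem_insert]
        constructor
        · rintro ⟨hKs, hm⟩
          have hle := hpt_le H K hm
          rcases eq_or_ne K H with rfl | hne
          · exact Or.inl rfl
          · exact Or.inr ⟨hKs, lt_of_le_of_ne hle (fun h => hne (Subtype.ext h.symm))⟩
        · rintro (rfl | ⟨hKs, hlt⟩)
          · exact ⟨hHs, hpt_mem K⟩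
          · exact ⟨hKs, hlt.le (hpt_mem H)⟩
      rw [hfe, Finset.sum_insert (by
        simp only [Finset.mem_filter]
        rintro ⟨-, hcon⟩
        exact lt_irrefl _ hcon)] at h0
      exact h0
    suffices h : ∀ N : ℕ, ∀ H ∈ s, (s.filter fun K => H.1 < K.1).card ≤ N → c H = 0 by
      exact h _ K0 hK0 le_rfl
    intro N
    induction N with
    | zero =>
      intro H hHs hcard
      have h0 := hev H hHs
      have hempty : s.filter (fun K => H.1 < K.1) = ∅ :=
        Finset.card_eq_zero.mp (Nat.le_zero.mp hcard)
      rw [hempty, Finset.sum_empty, add_zero] at h0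
      exact h0
    | succ N ih =>
      intro H hHs hcard
      have h0 := hev H hHs
      have hz : ∀ K ∈ s.filter (fun K => H.1 < K.1), c K = 0 := by
        intro K hK
        obtain ⟨hKs, hlt⟩ := Finset.mem_filter.mp hK
        refine ih K hKs ?_
        have hsub : s.filter (fun L => K.1 < L.1) ⊆ (s.filter fun L => H.1 < L.1).erase K := by
          intro L hL
          obtain ⟨hLs, hKL⟩ := Finset.mem_filter.mp hL
          refine Finset.mem_erase.mpr ⟨?_, Finset.mem_filter.mpr ⟨hLs, hlt.trans hKL⟩⟩
          intro h
          rw [h] at hKL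
          exact lt_irrefl _ hKL
        have h1 := Finset.card_le_card hsub
        have hKmem : K ∈ s.filter (fun L => H.1 < L.1) := Finset.mem_filter.mpr ⟨hKs, hlt⟩
        have h2 := Finset.card_erase_of_mem hKmem
        omega
      rw [Finset.sum_eq_zero hz, add_zero] at h0
      exact h0
  · intro x
    constructor
    · intro hx φ
      let W0 : Submodule F (AddMonoidAlgebra F (GG p lam)) :=
        { carrier := {y | ∀ ψ : AddAut (GG p lam), AddMonoidAlgebra.mapDomain (⇑ψ) y = y}
          add_mem' := fun ha hb ψ => by
            rw [AddMonoidAlgebra.mapDomain_add, ha ψ, hb ψ]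
          zero_mem' := fun ψ => AddMonoidAlgebra.mapDomain_zero _
          smul_mem' := fun r y hy ψ => by
            apply AddMonoidAlgebra.coeff_injective
            rw [AddMonoidAlgebra.coeff_mapDomain, AddMonoidAlgebra.coeff_smul, Finsupp.mapDomain_smul,
              ← AddMonoidAlgebra.coeff_mapDomain, hy ψ] }
      have hsub : Submodule.span F (Set.range
          (fun H : {H : AddSubgroup (GG p lam) //
              ∀ φ : AddAut (GG p lam), H.map φ.toAddMonoidHom = H} =>
            sqty F ((H : AddSubgroup (GG p lam)) : Set (GG p lam)))) ≤ W0 := by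
        rw [Submodule.span_le]
        rintro y ⟨H, rfl⟩ ψ
        have hC : ∀ g, ψ g ∈ ((H : AddSubgroup (GG p lam)) : Set (GG p lam)) ↔
            g ∈ ((H : AddSubgroup (GG p lam)) : Set (GG p lam)) := by
          intro g
          simp only [SetLike.mem_coe]
          constructor
          · intro hg
            rw [← H.2 ψ] at hg
            obtain ⟨g', hg', hval⟩ := AddSubgroup.mem_map.mp hg
            have hval' : g' = g := ψ.injective hval
            rwa [← hval']
          · intro hg
            have h2 := AddSubgroup.mem_map_of_mem ψ.toAddMonoidHom hg
            rwa [H.2 ψ] at h2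
        have := mapDomain_sqty F ((H : AddSubgroup (GG p lam)) : Set (GG p lam)) ψ.toEquiv hC
        simpa using this
      exact hsub hx φ
    · intro hfix
      have hxg : ∀ g : GG p lam, x.coeff g = x.coeff (can p lam (amap p lam g)) := by
        intro g
        obtain ⟨φ, hφ⟩ := normal_form hp hmono g
        calc x.coeff g = (AddMonoidAlgebra.mapDomain (⇑φ) x).coeff (φ g) := by
              rw [AddMonoidAlgebra.coeff_mapDomain]
              exact (Finsupp.mapDomain_apply φ.injective x.coeff g).symm
        _ = x.coeff (φ g) := by rw [hfix φ]
        _ = x.coeff (can p lam (amap p lam g)) := by rw [hφ]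
      set Adm : Finset (Fin n → ℕ) := Finset.univ.image (amap p lam) with hAdm
      set indb : (Fin n → ℕ) → AddMonoidAlgebra F (GG p lam) :=
        fun b => sqty F {g : GG p lam | amap p lam g = b} with hindb
      have hAdmAdm : ∀ b ∈ Adm, Admissible lam b := by
        intro b hb
        obtain ⟨g, _, rfl⟩ := Finset.mem_image.mp hb
        exact amap_admissible hp hmono g
      have hdecomp : x = ∑ b ∈ Adm, x.coeff (can p lam b) • indb b := by
        ext g
        rw [AddMonoidAlgebra.coeff_sum, Finsupp.finset_sum_apply]
        simp only [ma_smul_apply, hindb, sqty_apply, Set.mem_setOf_eq,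
          mul_ite, mul_one, mul_zero]
        have hsingle := Finset.sum_eq_single_of_mem (s := Adm)
          (f := fun b => if amap p lam g = b then x.coeff (can p lam b) else 0) (amap p lam g)
          (Finset.mem_image.mpr ⟨g, Finset.mem_univ g, rfl⟩)
          (fun b _ hne => if_neg (fun h => hne h.symm))
        rw [hsingle, if_pos rfl]
        exact hxg g
      have hkey : ∀ N : ℕ, ∀ b ∈ Adm, ((Finset.univ.filter (· ∈ BoxG hp lam b)).card < N) →
          indb b ∈ Submodule.span F (Set.range
            (fun H : {H : AddSubgroup (GG p lam) //
                ∀ φ : AddAut (GG p lam), H.map φ.toAddMonoidHom = H} =>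
              sqty F ((H : AddSubgroup (GG p lam)) : Set (GG p lam)))) := by
        intro N
        induction N with
        | zero => intro b _ h; omega
        | succ N ih =>
          intro b hbA hcard
          have hadm := hAdmAdm b hbA
          have hkeyid : sqty F ((BoxG hp lam b : AddSubgroup (GG p lam)) : Set (GG p lam)) =
              ∑ b' ∈ Adm.filter (fun b' => ∀ i, b i ≤ b' i), indb b' := by
            ext g
            rw [AddMonoidAlgebra.coeff_sum, Finsupp.finset_sum_apply]
            simp only [hindb, sqty_apply, Set.mem_setOf_eq, SetLike.mem_coe]
            have hmem : g ∈ BoxG hp lam b ↔ ∀ i, b i ≤ amap p lam g i :=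
              mem_box_iff_amap hmono hadm
            by_cases hc : ∀ i, b i ≤ amap p lam g i
            · rw [if_pos (hmem.mpr hc)]
              have hsingle := Finset.sum_eq_single_of_mem
                (s := Adm.filter fun b' => ∀ i, b i ≤ b' i)
                (f := fun b' => @ite F (amap p lam g = b') (Classical.propDecidable _) (1 : F) 0) (amap p lam g)
                (Finset.mem_filter.mpr
                  ⟨Finset.mem_image.mpr ⟨g, Finset.mem_univ g, rfl⟩, hc⟩)
                (fun b'' _ hne => if_neg (fun h => hne h.symm))
              convert (hsingle.trans (if_pos rfl)).symm
            · rw [if_neg (fun h => hc (hmem.mp h)), Finset.sum_eq_zero]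
              intro b'' hb''
              refine if_neg (fun h => hc ?_)
              rw [h]
              exact (Finset.mem_filter.mp hb'').2
          have hbmem : b ∈ Adm.filter (fun b' => ∀ i, b i ≤ b' i) :=
            Finset.mem_filter.mpr ⟨hbA, fun i => le_rfl⟩
          have hsplit := Finset.add_sum_erase _ indb hbmem
          have heq : indb b = sqty F ((BoxG hp lam b : AddSubgroup (GG p lam)) : Set (GG p lam)) -
              ∑ b' ∈ (Adm.filter (fun b' => ∀ i, b i ≤ b' i)).erase b, indb b' := by
            rw [hkeyid, ← hsplit]
            abel
          rw [heq]
          refine Submodule.sub_mem _ ?_ (Submodule.sum_mem _ fun b' hb' => ?_)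
          · exact Submodule.subset_span
              ⟨⟨BoxG hp lam b, fun φ => box_is_char hp hmono hadm φ⟩, rfl⟩
          · obtain ⟨hbne, hbfil⟩ := Finset.mem_erase.mp hb'
            obtain ⟨hb'A, hble⟩ := Finset.mem_filter.mp hbfil
            have hadm' := hAdmAdm b' hb'A
            refine ih b' hb'A ?_
            have hss : (Finset.univ.filter (· ∈ BoxG hp lam b')) ⊂
                (Finset.univ.filter (· ∈ BoxG hp lam b)) := by
              rw [Finset.ssubset_def]
              constructor
              · intro g hg
                rw [Finset.mem_filter] at hg ⊢
                exact ⟨hg.1, box_mono hp hble hg.2⟩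
              · intro hcon
                have h1 : can p lam b ∈ BoxG hp lam b :=
                  (can_mem_box_iff hadm.1 hadm.1).mpr fun i => le_rfl
                have h2 : can p lam b ∉ BoxG hp lam b' := by
                  intro hmem2
                  have h3 := (can_mem_box_iff hadm.1 hadm'.1).mp hmem2
                  apply hbne
                  funext i
                  exact le_antisymm (h3 i) (hble i)
                exact h2 (Finset.mem_filter.mp
                  (hcon (Finset.mem_filter.mpr ⟨Finset.mem_univ _, h1⟩))).2
            have := Finset.card_lt_card hss
            omega
      rw [hdecomp]
      exact Submodule.sum_mem _ fun b hb => Submodule.smul_mem _ _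
        (hkey ((Finset.univ.filter (· ∈ BoxG hp lam b)).card + 1) b hb (Nat.lt_succ_self _))
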